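/- arXiv:1807.10873 — 3 statements merged into one kernel-verified Lean document; each statement's English description precedes it below -/
import Mathlib

section
/- Let V be a p×p real symmetric positive definite matrix and let λ' > 0 be such that wᵀ V⁻¹ w ≥ λ'⁻¹ ‖w‖² for every w ∈ ℝᵖ. Let ν₁,…,ν_p > 0 and a ∈ ℝᵖ. Then ∫_{ℝᵖ} exp(−½ (a−φ)ᵀ V⁻¹ (a−φ)) · ∏_{j=1}^p (2πν_j)^{−1/2} exp(−φ_j²/(2ν_j)) dφ ≤ ∏_{j=1}^p √(λ'/(λ'+ν_j)) · exp(−a_j²/(2(λ'+ν_j))). -/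
open Matrix Real MeasureTheory

lemma integral_rexp_quad (b c : ℝ) (hb : 0 < b) :
    ∫ x : ℝ, Real.exp (-b * x ^ 2 + c * x) = Real.sqrt (π / b) * Real.exp (c ^ 2 / (4 * b)) := by
  have h : ∀ x : ℝ, -b * x ^ 2 + c * x = -b * (x - c / (2 * b)) ^ 2 + c ^ 2 / (4 * b) := by
    intro x; field_simp; ring
  simp_rw [h, Real.exp_add, integral_mul_const]
  congr 1
  rw [show (∫ x : ℝ, Real.exp (-b * (x - c / (2 * b)) ^ 2)) = ∫ x : ℝ, Real.exp (-b * x ^ 2) from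
    integral_sub_right_eq_self (fun x => Real.exp (-b * x ^ 2)) _]
  exact integral_gaussian b

lemma integrable_rexp_quad (b c : ℝ) (hb : 0 < b) :
    Integrable (fun x : ℝ => Real.exp (-b * x ^ 2 + c * x)) := by
  have h : ∀ x : ℝ, -b * x ^ 2 + c * x = -b * (x - c / (2 * b)) ^ 2 + c ^ 2 / (4 * b) := by
    intro x; field_simp; ring
  simp_rw [h, Real.exp_add]
  exact (((integrable_exp_neg_mul_sq hb).comp_sub_right (c / (2 * b))).mul_const _)

lemma oneD_eq (lam' nu a : ℝ) (hl : 0 < lam') (hn : 0 < nu) (x : ℝ) :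
    Real.exp (-(a - x) ^ 2 / (2 * lam')) *
      ((Real.sqrt (2 * π * nu))⁻¹ * Real.exp (-x ^ 2 / (2 * nu))) =
    ((Real.sqrt (2 * π * nu))⁻¹ * Real.exp (-a ^ 2 / (2 * lam'))) *
      Real.exp (-(1 / (2 * lam') + 1 / (2 * nu)) * x ^ 2 + (a / lam') * x) := by
  have key : -(a - x) ^ 2 / (2 * lam') + -x ^ 2 / (2 * nu)
      = -a ^ 2 / (2 * lam') + (-(1 / (2 * lam') + 1 / (2 * nu)) * x ^ 2 + (a / lam') * x) := by
    field_simp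
    ring
  calc Real.exp (-(a - x) ^ 2 / (2 * lam')) *
        ((Real.sqrt (2 * π * nu))⁻¹ * Real.exp (-x ^ 2 / (2 * nu)))
      = (Real.sqrt (2 * π * nu))⁻¹ *
        Real.exp (-(a - x) ^ 2 / (2 * lam') + -x ^ 2 / (2 * nu)) := by
        rw [Real.exp_add]; ring
    _ = _ := by rw [key, Real.exp_add]; ring

lemma oneD (lam' nu a : ℝ) (hl : 0 < lam') (hn : 0 < nu) :
    ∫ x : ℝ, Real.exp (-(a - x) ^ 2 / (2 * lam')) *
        ((Real.sqrt (2 * π * nu))⁻¹ * Real.exp (-x ^ 2 / (2 * nu))) =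
      Real.sqrt (lam' / (lam' + nu)) * Real.exp (-a ^ 2 / (2 * (lam' + nu))) := by
  have hb : 0 < 1 / (2 * lam') + 1 / (2 * nu) := by positivity
  simp_rw [oneD_eq lam' nu a hl hn]
  rw [integral_const_mul, integral_rexp_quad _ _ hb]
  have hsq : (Real.sqrt (2 * π * nu))⁻¹ * Real.sqrt (π / (1 / (2 * lam') + 1 / (2 * nu)))
      = Real.sqrt (lam' / (lam' + nu)) := by
    rw [← Real.sqrt_inv, ← Real.sqrt_mul (by positivity)]
    congr 1
    field_simp
    ring
  have hexp : Real.exp (-a ^ 2 / (2 * lam')) *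
      Real.exp ((a / lam') ^ 2 / (4 * (1 / (2 * lam') + 1 / (2 * nu))))
      = Real.exp (-a ^ 2 / (2 * (lam' + nu))) := by
    rw [← Real.exp_add]
    congr 1
    field_simp
    ring
  calc (Real.sqrt (2 * π * nu))⁻¹ * Real.exp (-a ^ 2 / (2 * lam')) *
        (Real.sqrt (π / (1 / (2 * lam') + 1 / (2 * nu))) *
          Real.exp ((a / lam') ^ 2 / (4 * (1 / (2 * lam') + 1 / (2 * nu)))))
      = ((Real.sqrt (2 * π * nu))⁻¹ * Real.sqrt (π / (1 / (2 * lam') + 1 / (2 * nu)))) *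
        (Real.exp (-a ^ 2 / (2 * lam')) *
          Real.exp ((a / lam') ^ 2 / (4 * (1 / (2 * lam') + 1 / (2 * nu))))) := by ring
    _ = _ := by rw [hsq, hexp]

lemma oneD_integrable (lam' nu a : ℝ) (hl : 0 < lam') (hn : 0 < nu) :
    Integrable (fun x : ℝ => Real.exp (-(a - x) ^ 2 / (2 * lam')) *
        ((Real.sqrt (2 * π * nu))⁻¹ * Real.exp (-x ^ 2 / (2 * nu)))) := by
  have hb : 0 < 1 / (2 * lam') + 1 / (2 * nu) := by positivity
  simp_rw [oneD_eq lam' nu a hl hn]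
  exact (integrable_rexp_quad _ _ hb).const_mul _

/-- Upper bound on the spike-and-slab marginal likelihood: if `wᵀ V⁻¹ w ≥ λ'⁻¹ ‖w‖²`
for all `w`, then
`∫ exp(−½ (a−φ)ᵀ V⁻¹ (a−φ)) ∏ⱼ (2πνⱼ)^{-1/2} exp(−φⱼ²/(2νⱼ)) dφ
  ≤ ∏ⱼ √(λ'/(λ'+νⱼ)) exp(−aⱼ²/(2(λ'+νⱼ)))`. -/
theorem stmt_5 {p : ℕ} (V : Matrix (Fin p) (Fin p) ℝ) (hV : V.PosDef)
    (lam' : ℝ) (hlam' : 0 < lam')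
    (hbound : ∀ w : Fin p → ℝ, lam'⁻¹ * (w ⬝ᵥ w) ≤ w ⬝ᵥ V⁻¹.mulVec w)
    (ν : Fin p → ℝ) (hν : ∀ j, 0 < ν j) (a : Fin p → ℝ) :
    (∫ φ : Fin p → ℝ,
        Real.exp (-(1 / 2) * ((a - φ) ⬝ᵥ V⁻¹.mulVec (a - φ))) *
          ∏ j, (Real.sqrt (2 * Real.pi * ν j))⁻¹ * Real.exp (-(φ j) ^ 2 / (2 * ν j))) ≤
      ∏ j, Real.sqrt (lam' / (lam' + ν j)) * Real.exp (-(a j) ^ 2 / (2 * (lam' + ν j))) := by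
  set g : (Fin p → ℝ) → ℝ := fun φ => ∏ j,
    Real.exp (-(a j - φ j) ^ 2 / (2 * lam')) *
      ((Real.sqrt (2 * π * ν j))⁻¹ * Real.exp (-(φ j) ^ 2 / (2 * ν j))) with hg
  have hgint : Integrable g := by
    apply Integrable.fintype_prod (f := fun j x =>
      Real.exp (-(a j - x) ^ 2 / (2 * lam')) *
        ((Real.sqrt (2 * π * ν j))⁻¹ * Real.exp (-x ^ 2 / (2 * ν j))))
    exact fun j => oneD_integrable lam' (ν j) (a j) hlam' (hν j)
  have hle : ∀ φ : Fin p → ℝ,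
      Real.exp (-(1 / 2) * ((a - φ) ⬝ᵥ V⁻¹.mulVec (a - φ))) *
        (∏ j, (Real.sqrt (2 * Real.pi * ν j))⁻¹ * Real.exp (-(φ j) ^ 2 / (2 * ν j))) ≤ g φ := by
    intro φ
    have hdot : (a - φ) ⬝ᵥ (a - φ) = ∑ j, (a j - φ j) ^ 2 := by
      simp [dotProduct, sq]
    have h1 : Real.exp (-(1 / 2) * ((a - φ) ⬝ᵥ V⁻¹.mulVec (a - φ)))
        ≤ ∏ j, Real.exp (-(a j - φ j) ^ 2 / (2 * lam')) := by
      rw [← Real.exp_sum]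
      apply Real.exp_le_exp.2
      have hb := hbound (a - φ)
      rw [hdot] at hb
      have h2 : ∑ j, -(a j - φ j) ^ 2 / (2 * lam')
          = -(1 / 2) * (lam'⁻¹ * ∑ j, (a j - φ j) ^ 2) := by
        rw [Finset.mul_sum, Finset.mul_sum]
        apply Finset.sum_congr rfl
        intro j _
        field_simp
      rw [h2]
      nlinarith [hb]
    calc Real.exp (-(1 / 2) * ((a - φ) ⬝ᵥ V⁻¹.mulVec (a - φ))) *
          (∏ j, (Real.sqrt (2 * Real.pi * ν j))⁻¹ * Real.exp (-(φ j) ^ 2 / (2 * ν j)))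
        ≤ (∏ j, Real.exp (-(a j - φ j) ^ 2 / (2 * lam'))) *
          (∏ j, (Real.sqrt (2 * Real.pi * ν j))⁻¹ * Real.exp (-(φ j) ^ 2 / (2 * ν j))) := by
          apply mul_le_mul_of_nonneg_right h1
          exact Finset.prod_nonneg fun j _ => by positivity
      _ = g φ := by rw [hg, ← Finset.prod_mul_distrib]
  calc (∫ φ : Fin p → ℝ,
        Real.exp (-(1 / 2) * ((a - φ) ⬝ᵥ V⁻¹.mulVec (a - φ))) *
          ∏ j, (Real.sqrt (2 * Real.pi * ν j))⁻¹ * Real.exp (-(φ j) ^ 2 / (2 * ν j)))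
      ≤ ∫ φ, g φ := by
        apply integral_mono_of_nonneg
        · exact Filter.Eventually.of_forall fun φ => by
            have : (0:ℝ) ≤ ∏ j, (Real.sqrt (2 * Real.pi * ν j))⁻¹ *
                Real.exp (-(φ j) ^ 2 / (2 * ν j)) :=
              Finset.prod_nonneg fun j _ => by positivity
            positivity
        · exact hgint
        · exact Filter.Eventually.of_forall hle
    _ = ∏ j, ∫ x : ℝ, Real.exp (-(a j - x) ^ 2 / (2 * lam')) *
          ((Real.sqrt (2 * π * ν j))⁻¹ * Real.exp (-x ^ 2 / (2 * ν j))) := by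
        rw [hg]
        exact integral_fintype_prod_eq_prod (fun j x =>
          Real.exp (-(a j - x) ^ 2 / (2 * lam')) *
            ((Real.sqrt (2 * π * ν j))⁻¹ * Real.exp (-x ^ 2 / (2 * ν j))))
    _ = ∏ j, Real.sqrt (lam' / (lam' + ν j)) * Real.exp (-(a j) ^ 2 / (2 * (lam' + ν j))) :=
        Finset.prod_congr rfl fun j _ => oneD lam' (ν j) (a j) hlam' (hν j)
end

section
/- Let 0 < λ_min ≤ λ_max and c > 0, M > 0, M' > 0 be real constants. Let (ν₀ₙ) be a sequence of nonnegative reals with n·ν₀ₙ ≤ M' for all n, let (ν₁ₙ) satisfy ν₁ₙ ≥ c·n for all n, and let (a_n) satisfy n·a_n² ≤ M for all n. Define H_n = √[ (λ_max/n)(λ_min/n + ν₀ₙ) / ((λ_min/n)(λ_max/n + ν₁ₙ)) ] · exp( a_n²/(2(λ_min/n + ν₀ₙ)) − a_n²/(2(λ_max/n + ν₁ₙ)) ). Then the sequence n·H_n is bounded, i.e., H_n = O(1/n). -/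
open Filter Real

/-- Deterministic version of `Hₙ(1,0) = O(n⁻¹)` in the proof of Theorem 2:
the sequence `n · Hₙ` is bounded. -/
theorem stmt_10 (lmin lmax c M M' : ℝ) (h0 : 0 < lmin) (hle : lmin ≤ lmax)
    (hc : 0 < c) (hM : 0 < M) (hM' : 0 < M')
    (ν₀ : ℕ → ℝ) (hν₀0 : ∀ n, 0 ≤ ν₀ n) (hν₀ : ∀ n : ℕ, (n : ℝ) * ν₀ n ≤ M')
    (ν₁ : ℕ → ℝ) (hν₁ : ∀ n : ℕ, c * n ≤ ν₁ n)
    (a : ℕ → ℝ) (ha : ∀ n : ℕ, (n : ℝ) * (a n) ^ 2 ≤ M) :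
    ∃ K : ℝ, ∀ n : ℕ,
      |(n : ℝ) *
        (Real.sqrt ((lmax / n) * (lmin / n + ν₀ n) / ((lmin / n) * (lmax / n + ν₁ n))) *
          Real.exp ((a n) ^ 2 / (2 * (lmin / n + ν₀ n)) -
            (a n) ^ 2 / (2 * (lmax / n + ν₁ n))))| ≤ K := by
  set K : ℝ := Real.sqrt (lmax * (lmin + M') / (lmin * c)) * Real.exp (M / (2 * lmin)) with hK
  have hKnn : 0 ≤ K := mul_nonneg (Real.sqrt_nonneg _) (Real.exp_pos _).le
  refine ⟨K, fun n => ?_⟩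
  rcases Nat.eq_zero_or_pos n with rfl | hn
  · simpa using hKnn
  have hn' : (0:ℝ) < n := by exact_mod_cast hn
  have hlmax : 0 < lmax := lt_of_lt_of_le h0 hle
  have hν₁n : 0 < ν₁ n := lt_of_lt_of_le (by positivity) (hν₁ n)
  have hd1 : 0 < lmin / n + ν₀ n := by
    have := hν₀0 n; positivity
  have hd2 : 0 < lmax / n + ν₁ n := by positivity
  have hxnn : 0 ≤ (n : ℝ) *
      (Real.sqrt ((lmax / n) * (lmin / n + ν₀ n) / ((lmin / n) * (lmax / n + ν₁ n))) *
        Real.exp ((a n) ^ 2 / (2 * (lmin / n + ν₀ n)) -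
          (a n) ^ 2 / (2 * (lmax / n + ν₁ n)))) := by positivity
  rw [abs_of_nonneg hxnn]
  -- bound the sqrt part: n * sqrt R ≤ sqrt (lmax*(lmin+M')/(lmin*c))
  have hν₀le : ν₀ n ≤ M' / n := by
    rw [le_div_iff₀ hn']
    have := hν₀ n; linarith [this]
  have hnum : (lmax / n) * (lmin / n + ν₀ n) ≤ (lmax / n) * ((lmin + M') / n) := by
    apply mul_le_mul_of_nonneg_left _ (by positivity)
    have : (lmin + M') / n = lmin / n + M' / n := by ring
    rw [this]
    linarith [hν₀le]
  have hden : (lmin / n) * (c * n) ≤ (lmin / n) * (lmax / n + ν₁ n) := by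
    apply mul_le_mul_of_nonneg_left _ (by positivity)
    have := hν₁ n
    have : 0 ≤ lmax / n := by positivity
    linarith [hν₁ n]
  have hR : (lmax / n) * (lmin / n + ν₀ n) / ((lmin / n) * (lmax / n + ν₁ n)) ≤
      ((lmax / n) * ((lmin + M') / n)) / ((lmin / n) * (c * n)) := by
    apply div_le_div₀ (by positivity) hnum (by positivity) hden
  have hsq : (n : ℝ) * Real.sqrt ((lmax / n) * (lmin / n + ν₀ n) / ((lmin / n) * (lmax / n + ν₁ n)))
      ≤ Real.sqrt (lmax * (lmin + M') / (lmin * c)) := by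
    have h1 : (n : ℝ) * Real.sqrt ((lmax / n) * (lmin / n + ν₀ n) / ((lmin / n) * (lmax / n + ν₁ n)))
        = Real.sqrt ((n:ℝ)^2 * ((lmax / n) * (lmin / n + ν₀ n) / ((lmin / n) * (lmax / n + ν₁ n)))) := by
      rw [Real.sqrt_mul (by positivity), Real.sqrt_sq hn'.le]
    rw [h1]
    apply Real.sqrt_le_sqrt
    calc (n:ℝ)^2 * ((lmax / n) * (lmin / n + ν₀ n) / ((lmin / n) * (lmax / n + ν₁ n)))
        ≤ (n:ℝ)^2 * (((lmax / n) * ((lmin + M') / n)) / ((lmin / n) * (c * n))) := by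
          apply mul_le_mul_of_nonneg_left hR (by positivity)
      _ = lmax * (lmin + M') / (lmin * c) := by
          field_simp
  -- bound the exp part
  have hexp : Real.exp ((a n) ^ 2 / (2 * (lmin / n + ν₀ n)) - (a n) ^ 2 / (2 * (lmax / n + ν₁ n)))
      ≤ Real.exp (M / (2 * lmin)) := by
    apply Real.exp_le_exp.2
    have h2 : (a n) ^ 2 / (2 * (lmax / n + ν₁ n)) ≥ 0 := by positivity
    have h3 : (a n) ^ 2 / (2 * (lmin / n + ν₀ n)) ≤ (a n) ^ 2 / (2 * (lmin / n)) := by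
      apply div_le_div_of_nonneg_left (by positivity) (by positivity)
      have := hν₀0 n
      linarith
    have h4 : (a n) ^ 2 / (2 * (lmin / n)) ≤ M / (2 * lmin) := by
      have heq : (a n) ^ 2 / (2 * (lmin / n)) = ((n:ℝ) * (a n) ^ 2) / (2 * lmin) := by
        field_simp
      rw [heq]
      exact div_le_div_of_nonneg_right (ha n) (by positivity) |>.trans_eq rfl
    linarith
  calc (n : ℝ) *
        (Real.sqrt ((lmax / n) * (lmin / n + ν₀ n) / ((lmin / n) * (lmax / n + ν₁ n))) *
          Real.exp ((a n) ^ 2 / (2 * (lmin / n + ν₀ n)) - (a n) ^ 2 / (2 * (lmax / n + ν₁ n))))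
      = ((n : ℝ) * Real.sqrt ((lmax / n) * (lmin / n + ν₀ n) / ((lmin / n) * (lmax / n + ν₁ n)))) *
          Real.exp ((a n) ^ 2 / (2 * (lmin / n + ν₀ n)) - (a n) ^ 2 / (2 * (lmax / n + ν₁ n))) := by
        ring
    _ ≤ Real.sqrt (lmax * (lmin + M') / (lmin * c)) * Real.exp (M / (2 * lmin)) := by
        apply mul_le_mul hsq hexp (Real.exp_pos _).le (Real.sqrt_nonneg _)
end

section
/- Let 0 < λ_min ≤ λ_max and c > 0, C > 0, M' > 0 be real constants. Let (ν₀ₙ) be a sequence of nonnegative reals with n·ν₀ₙ ≤ M' for all n, let (ν₁ₙ) satisfy c·n ≤ ν₁ₙ ≤ C·n for all n, and let (a_n) be a sequence of reals converging to some a ≠ 0. Define H_n = √[ (λ_max/n)(λ_min/n + ν₁ₙ) / ((λ_min/n)(λ_max/n + ν₀ₙ)) ] · exp( −a_n²/(2(λ_max/n + ν₀ₙ)) + a_n²/(2(λ_min/n + ν₁ₙ)) ). Then there exists κ > 0 such that e^{κn}·H_n → 0 as n → ∞; in particular H_n → 0 exponentially fast. -/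
set_option maxHeartbeats 800000


open Filter Real

/-- Auxiliary: `x² e^{-bx} → 0` as `x → ∞` for `b > 0`. -/
lemma aux_sq_exp (b : ℝ) (hb : 0 < b) :
    Tendsto (fun x : ℝ => x ^ 2 * Real.exp (-(b * x))) atTop (nhds 0) := by
  have hmul : Tendsto (fun x : ℝ => b * x) atTop atTop :=
    Tendsto.const_mul_atTop hb tendsto_id
  have h := (tendsto_pow_mul_exp_neg_atTop_nhds_zero 2).comp hmul
  have h2 : Tendsto (fun x : ℝ => (b ^ 2)⁻¹ * ((b * x) ^ 2 * Real.exp (-(b * x))))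
      atTop (nhds 0) := by
    simpa using h.const_mul (b ^ 2)⁻¹
  refine h2.congr (fun x => ?_)
  field_simp

/-- Deterministic version of `Hₙ(0,1) = O(exp(−n))` in the proof of Theorem 2:
there exists `κ > 0` with `e^{κn} Hₙ → 0`. -/
theorem stmt_11 (lmin lmax c C M' : ℝ) (h0 : 0 < lmin) (hle : lmin ≤ lmax)
    (hc : 0 < c) (hC : 0 < C) (hM' : 0 < M')
    (ν₀ : ℕ → ℝ) (hν₀0 : ∀ n, 0 ≤ ν₀ n) (hν₀ : ∀ n : ℕ, (n : ℝ) * ν₀ n ≤ M')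
    (ν₁ : ℕ → ℝ) (hν₁l : ∀ n : ℕ, c * n ≤ ν₁ n) (hν₁u : ∀ n : ℕ, ν₁ n ≤ C * n)
    (a : ℕ → ℝ) (alim : ℝ) (halim : alim ≠ 0)
    (ha : Tendsto a atTop (nhds alim)) :
    ∃ κ : ℝ, 0 < κ ∧
      Tendsto (fun n : ℕ =>
        Real.exp (κ * n) *
          (Real.sqrt ((lmax / n) * (lmin / n + ν₁ n) / ((lmin / n) * (lmax / n + ν₀ n))) *
            Real.exp (-(a n) ^ 2 / (2 * (lmax / n + ν₀ n)) +
              (a n) ^ 2 / (2 * (lmin / n + ν₁ n)))))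
        atTop (nhds 0) := by
  have hmax : 0 < lmax := lt_of_lt_of_le h0 hle
  have hsq : 0 < alim ^ 2 := by positivity
  set L : ℝ := lmax + M' with hL
  have hLpos : 0 < L := by positivity
  set ε : ℝ := alim ^ 2 / (4 * L) with hε
  have hεpos : 0 < ε := by positivity
  set κ : ℝ := ε / 2 with hκ
  have hκpos : 0 < κ := by positivity
  set D : ℝ := alim ^ 2 / c with hD
  set K : ℝ := (lmin + C) / lmin with hK
  have hKpos : 0 < K := by positivity
  refine ⟨κ, hκpos, ?_⟩
  -- dominating sequence
  have hg : Tendsto (fun n : ℕ =>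
      (Real.sqrt K * Real.exp D) * ((n : ℝ) ^ 2 * Real.exp (-(κ * n))))
      atTop (nhds 0) := by
    have := ((aux_sq_exp κ hκpos).comp tendsto_natCast_atTop_atTop).const_mul
      (Real.sqrt K * Real.exp D)
    simpa using this
  -- eventual bounds on (a n)^2
  have hq : Tendsto (fun n => (a n) ^ 2) atTop (nhds (alim ^ 2)) := ha.pow 2
  have hev1 : ∀ᶠ n in atTop, alim ^ 2 / 2 < (a n) ^ 2 :=
    hq.eventually (eventually_gt_nhds (by linarith))
  have hev2 : ∀ᶠ n in atTop, (a n) ^ 2 < 2 * alim ^ 2 :=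
    hq.eventually (eventually_lt_nhds (by linarith))
  have hev3 : ∀ᶠ n : ℕ in atTop, 1 ≤ n := eventually_ge_atTop 1
  refine tendsto_of_tendsto_of_tendsto_of_le_of_le' tendsto_const_nhds hg ?_ ?_
  · filter_upwards with n
    positivity
  · filter_upwards [hev1, hev2, hev3] with n h1 h2 h3
    have hn1 : (1 : ℝ) ≤ (n : ℝ) := by exact_mod_cast h3
    have hnpos : (0 : ℝ) < n := by linarith
    have hν₀n : ν₀ n ≤ M' / n := (le_div_iff₀ hnpos).mpr (by
      have := hν₀ n; linarith [hν₀ n])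
    have hden0 : (0 : ℝ) < lmax / n + ν₀ n :=
      add_pos_of_pos_of_nonneg (by positivity) (hν₀0 n)
    have hcn : (0 : ℝ) < c * n := by positivity
    have hden1 : (0 : ℝ) < lmin / n + ν₁ n := by
      have := hν₁l n
      have : (0:ℝ) < ν₁ n := lt_of_lt_of_le hcn this
      positivity
    -- bound on the sqrt factor
    have hA : (lmax / n) * (lmin / n + ν₁ n) / ((lmin / n) * (lmax / n + ν₀ n))
        ≤ K * (n : ℝ) ^ 3 := by
      have hnum : (lmax / n) * (lmin / n + ν₁ n) ≤ lmax * ((lmin + C) * n) := by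
        have h1' : lmax / n ≤ lmax := by
          rw [div_le_iff₀ hnpos]; nlinarith
        have h2' : lmin / n + ν₁ n ≤ (lmin + C) * n := by
          have ha1 : lmin / n ≤ lmin := by rw [div_le_iff₀ hnpos]; nlinarith
          have ha2 : lmin ≤ lmin * n := by nlinarith
          have ha3 := hν₁u n
          nlinarith
        have hn2 : 0 ≤ lmin / n + ν₁ n := le_of_lt hden1
        exact mul_le_mul h1' h2' hn2 (le_of_lt hmax)
      have hdenlb : lmin * lmax / (n : ℝ) ^ 2 ≤ (lmin / n) * (lmax / n + ν₀ n) := by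
        have : lmax / n ≤ lmax / n + ν₀ n := by linarith [hν₀0 n]
        have h' : (lmin / n) * (lmax / n) ≤ (lmin / n) * (lmax / n + ν₀ n) := by
          apply mul_le_mul_of_nonneg_left this (by positivity)
        calc lmin * lmax / (n : ℝ) ^ 2 = (lmin / n) * (lmax / n) := by
              field_simp
          _ ≤ _ := h'
      have hdlb : (0:ℝ) < lmin * lmax / (n : ℝ) ^ 2 := by positivity
      calc (lmax / n) * (lmin / n + ν₁ n) / ((lmin / n) * (lmax / n + ν₀ n))
          ≤ (lmax * ((lmin + C) * n)) / (lmin * lmax / (n : ℝ) ^ 2) :=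
            div_le_div₀ (by positivity) hnum hdlb hdenlb
        _ = K * (n : ℝ) ^ 3 := by
            rw [hK]; field_simp
    have hsqrt : Real.sqrt ((lmax / n) * (lmin / n + ν₁ n) / ((lmin / n) * (lmax / n + ν₀ n)))
        ≤ Real.sqrt K * (n : ℝ) ^ 2 := by
      have h4 : K * (n : ℝ) ^ 3 ≤ K * (n : ℝ) ^ 4 := by
        apply mul_le_mul_of_nonneg_left _ (le_of_lt hKpos)
        calc (n:ℝ)^3 = (n:ℝ)^3 * 1 := by ring
          _ ≤ (n:ℝ)^3 * n := by
              apply mul_le_mul_of_nonneg_left hn1 (by positivity)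
          _ = (n:ℝ)^4 := by ring
      calc Real.sqrt ((lmax / n) * (lmin / n + ν₁ n) / ((lmin / n) * (lmax / n + ν₀ n)))
          ≤ Real.sqrt (K * (n : ℝ) ^ 4) :=
            Real.sqrt_le_sqrt (le_trans hA h4)
        _ = Real.sqrt K * (n : ℝ) ^ 2 := by
            rw [Real.sqrt_mul (le_of_lt hKpos)]
            congr 1
            rw [show ((n:ℝ)^4) = ((n:ℝ)^2)^2 by ring, Real.sqrt_sq (by positivity)]
    -- bound on the exponential factor
    have hexp : -(a n) ^ 2 / (2 * (lmax / n + ν₀ n)) +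
        (a n) ^ 2 / (2 * (lmin / n + ν₁ n)) ≤ -(ε * n) + D := by
      have hterm1 : ε * n ≤ (a n) ^ 2 / (2 * (lmax / n + ν₀ n)) := by
        rw [le_div_iff₀ (by positivity)]
        have hdn : lmax / n + ν₀ n ≤ L / n := by
          rw [hL, add_div]; linarith
        have h5 : ε * n * (2 * (lmax / n + ν₀ n)) ≤ ε * n * (2 * (L / n)) := by
          apply mul_le_mul_of_nonneg_left (by linarith) (by positivity)
        have h6 : ε * n * (2 * (L / n)) = alim ^ 2 / 2 := by
          rw [hε]; field_simp; ring
        linarith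
      have hterm2 : (a n) ^ 2 / (2 * (lmin / n + ν₁ n)) ≤ D := by
        rw [div_le_iff₀ (by positivity)]
        have h7 : 2 * c * 1 ≤ 2 * (lmin / n + ν₁ n) := by
          have := hν₁l n
          have hln : 0 ≤ lmin / n := by positivity
          nlinarith
        have h8 : D * (2 * c) ≤ D * (2 * (lmin / n + ν₁ n)) := by
          apply mul_le_mul_of_nonneg_left (by linarith) (by positivity)
        have h9 : D * (2 * c) = 2 * alim ^ 2 := by
          rw [hD]; field_simp
        linarith
      have hneg : -(a n) ^ 2 / (2 * (lmax / n + ν₀ n)) =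
          -((a n) ^ 2 / (2 * (lmax / n + ν₀ n))) := by ring
      linarith
    have hexp' : Real.exp (-(a n) ^ 2 / (2 * (lmax / n + ν₀ n)) +
        (a n) ^ 2 / (2 * (lmin / n + ν₁ n))) ≤ Real.exp (-(ε * n) + D) :=
      Real.exp_le_exp.mpr hexp
    -- combine
    have hsqrt0 : 0 ≤ Real.sqrt ((lmax / n) * (lmin / n + ν₁ n) /
        ((lmin / n) * (lmax / n + ν₀ n))) := Real.sqrt_nonneg _
    calc Real.exp (κ * n) *
          (Real.sqrt ((lmax / n) * (lmin / n + ν₁ n) / ((lmin / n) * (lmax / n + ν₀ n))) *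
            Real.exp (-(a n) ^ 2 / (2 * (lmax / n + ν₀ n)) +
              (a n) ^ 2 / (2 * (lmin / n + ν₁ n))))
        ≤ Real.exp (κ * n) * ((Real.sqrt K * (n : ℝ) ^ 2) * Real.exp (-(ε * n) + D)) := by
          apply mul_le_mul_of_nonneg_left _ (le_of_lt (Real.exp_pos _))
          exact mul_le_mul hsqrt hexp' (le_of_lt (Real.exp_pos _)) (by positivity)
      _ = (Real.sqrt K * Real.exp D) * ((n : ℝ) ^ 2 * Real.exp (-(κ * n))) := by
          have hee : Real.exp (κ * n) * Real.exp (-(ε * n) + D) =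
              Real.exp (-(κ * n)) * Real.exp D := by
            rw [← Real.exp_add, ← Real.exp_add]
            congr 1
            rw [hκ]; ring
          linear_combination (Real.sqrt K * (n : ℝ) ^ 2) * hee
end
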